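/- For d ≥ 2, p ∈ (0,1], λ ∈ (0,1), let z = pλ^d/(1−(1−p)λ) and Q = (λ/(1−(1−p)λ)) Σ_{n≥0} z^n/(1+n(d−1)) and Q̃ = (λ/(1−(1−p)λ))(1 + log((1−(1−p)λ)/(1−(1−p)λ−pλ^d))/(d−1)). Then Q̃ − (λ^{d+1}/(p(d−1)²(1−(1−p)λ)²))·π²/6 ≤ Q ≤ Q̃. -/

import Mathlib

open Real

set_option maxHeartbeats 2000000 in
theorem stmt_17 (d : ℕ) (hd : 2 ≤ d) (p l : ℝ)
    (hp : p ∈ Set.Ioc (0:ℝ) 1) (hl : l ∈ Set.Ioo (0:ℝ) 1)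
    (z Q Qt : ℝ)
    (hz : z = p * l ^ d / (1 - (1 - p) * l))
    (hQ : Q = (l / (1 - (1 - p) * l)) *
      ∑' n : ℕ, z ^ n / (1 + (n : ℝ) * ((d:ℝ) - 1)))
    (hQt : Qt = (l / (1 - (1 - p) * l)) *
      (1 + Real.log ((1 - (1 - p) * l) / (1 - (1 - p) * l - p * l ^ d)) / ((d:ℝ) - 1))) :
    Qt - (l ^ (d + 1) / (p * ((d:ℝ) - 1) ^ 2 * (1 - (1 - p) * l) ^ 2)) *
        (Real.pi ^ 2 / 6) ≤ Q ∧ Q ≤ Qt := by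
  obtain ⟨hp0, hp1⟩ := hp
  obtain ⟨hl0, hl1⟩ := hl
  set c := 1 - (1 - p) * l with hcdef
  have hc : 0 < c := by simp only [hcdef]; nlinarith
  have hld : l ^ d ≤ l := by
    calc l ^ d ≤ l ^ 1 := pow_le_pow_of_le_one hl0.le hl1.le (by omega)
    _ = l := pow_one l
  have hld0 : 0 < l ^ d := pow_pos hl0 d
  have hz0 : 0 < z := by rw [hz]; positivity
  have hcz : p * l ^ d < c := by simp only [hcdef]; nlinarith
  have hz1 : z < 1 := by rw [hz, div_lt_one hc]; exact hcz
  have hD : (1:ℝ) ≤ (d:ℝ) - 1 := by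
    have h2 : (2:ℝ) ≤ (d:ℝ) := by exact_mod_cast hd
    linarith
  set D := (d:ℝ) - 1 with hDdef
  have hD0 : 0 < D := lt_of_lt_of_le one_pos hD
  set a := l / c with hadef
  have ha0 : 0 < a := div_pos hl0 hc
  clear_value c D a
  -- g series : HasSum
  have hgsum : HasSum (fun n : ℕ => z ^ (n+1) / (((n:ℝ)+1) * D)) (-Real.log (1 - z) / D) := by
    have h := (hasSum_pow_div_log_of_abs_lt_one (x := z)
      (by rw [abs_of_pos hz0]; exact hz1)).div_const D
    convert h using 2 with n
    · rfl
    push_cast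
    rw [div_div]
  -- f summable
  have hfsummable : Summable (fun n : ℕ => z ^ n / (1 + (n:ℝ) * D)) := by
    refine Summable.of_nonneg_of_le (fun n => by positivity)
      (fun n => div_le_self (by positivity)
        (by nlinarith [Nat.cast_nonneg (α := ℝ) n]))
      (summable_geometric_of_lt_one hz0.le hz1)
  have hhsummable : Summable (fun n : ℕ => z ^ (n+1) / (1 + ((n:ℝ)+1) * D)) := by
    have := (summable_nat_add_iff 1).2 hfsummable
    convert this using 2 with n
    · rfl
    push_cast
    ring_nf
  have hhsum := hhsummable.hasSum
  set T := ∑' n : ℕ, z ^ (n+1) / (1 + ((n:ℝ)+1) * D) with hTdef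
  -- split Q's sum
  have hsplit : (∑' n : ℕ, z ^ n / (1 + (n:ℝ) * D)) = 1 + T := by
    rw [Summable.tsum_eq_zero_add hfsummable]
    norm_num
    rfl
  -- termwise bounds
  have hterm_le : ∀ n : ℕ, z ^ (n+1) / (1 + ((n:ℝ)+1) * D) ≤ z ^ (n+1) / (((n:ℝ)+1) * D) := by
    intro n
    have hm : (0:ℝ) < ((n:ℝ)+1) * D := by positivity
    exact div_le_div_of_nonneg_left (by positivity) hm (by linarith)
  have hTG : T ≤ -Real.log (1 - z) / D := by
    rw [← hgsum.tsum_eq]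
    exact Summable.tsum_le_tsum hterm_le hhsummable hgsum.summable
  -- Qt expressed with G
  have h1z : 1 - z = (c - p * l ^ d) / c := by
    rw [hz]; field_simp
  have hlogeq : Real.log (c / (c - p * l ^ d)) = -Real.log (1 - z) := by
    rw [h1z, ← Real.log_inv, inv_div]
  have hQt' : Qt = a * (1 + -Real.log (1 - z) / D) := by
    rw [hQt, hlogeq]
  have hQ' : Q = a * (1 + T) := by
    rw [hQ, hsplit]
  constructor
  · -- lower bound
    -- G - T ≤ z * (π²/6) / D²
    have hbasel : HasSum (fun n : ℕ => 1 / ((n:ℝ)+1) ^ 2) (π ^ 2 / 6) := by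
      have h2 := (hasSum_nat_add_iff' (f := fun n : ℕ => (1:ℝ) / (n:ℝ) ^ 2) 1).2 hasSum_zeta_two
      norm_num at h2
      convert h2 using 2 with n
      · rfl
      push_cast
      ring_nf
    have hbound : HasSum (fun n : ℕ => z * (1 / ((n:ℝ)+1) ^ 2) / D ^ 2)
        (z * (π ^ 2 / 6) / D ^ 2) := (hbasel.mul_left z).div_const (D ^ 2)
    have hdiffsum : HasSum
        (fun n : ℕ => z ^ (n+1) / (((n:ℝ)+1) * D) - z ^ (n+1) / (1 + ((n:ℝ)+1) * D))
        (-Real.log (1 - z) / D - T) := hgsum.sub hhsum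
    have hdterm : ∀ n : ℕ,
        z ^ (n+1) / (((n:ℝ)+1) * D) - z ^ (n+1) / (1 + ((n:ℝ)+1) * D)
          ≤ z * (1 / ((n:ℝ)+1) ^ 2) / D ^ 2 := by
      intro n
      set m := (n:ℝ) + 1 with hm
      have hm1 : (1:ℝ) ≤ m := by
        rw [hm]; exact le_add_of_nonneg_left (Nat.cast_nonneg n)
      have hm0 : (0:ℝ) < m := by linarith
      have key : z ^ (n+1) / (m * D) - z ^ (n+1) / (1 + m * D)
          = z ^ (n+1) * (1 / (m * D * (1 + m * D))) := by
        field_simp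
        ring
      rw [key]
      have hzn : z ^ (n+1) ≤ z := by
        calc z ^ (n+1) ≤ z ^ 1 := pow_le_pow_of_le_one hz0.le hz1.le (by omega)
        _ = z := pow_one z
      have hfrac : 1 / (m * D * (1 + m * D)) ≤ 1 / (m ^ 2 * D ^ 2) := by
        apply one_div_le_one_div_of_le (by positivity)
        nlinarith
      calc z ^ (n+1) * (1 / (m * D * (1 + m * D)))
          ≤ z * (1 / (m ^ 2 * D ^ 2)) := by
            exact mul_le_mul hzn hfrac (by positivity) hz0.le
        _ = z * (1 / m ^ 2) / D ^ 2 := by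
            field_simp
    have hGT : -Real.log (1 - z) / D - T ≤ z * (π ^ 2 / 6) / D ^ 2 := by
      rw [← hdiffsum.tsum_eq, ← hbound.tsum_eq]
      exact Summable.tsum_le_tsum hdterm hdiffsum.summable hbound.summable
    have hcoef : a * z / D ^ 2 ≤ l ^ (d + 1) / (p * D ^ 2 * c ^ 2) := by
      have haz : a * z / D ^ 2 = p * (l * l ^ d) / (c ^ 2 * D ^ 2) := by
        rw [hadef, hz]
        field_simp
      have hpow : l ^ (d + 1) = l * l ^ d := by ring
      rw [haz, hpow, div_le_div_iff₀ (by positivity) (by positivity)]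
      have hp2 : p * p ≤ 1 := by nlinarith
      nlinarith [mul_pos (mul_pos hl0 hld0) (mul_pos (pow_pos hc 2) (pow_pos hD0 2)), hp2]
    have hpi : (0:ℝ) ≤ π ^ 2 / 6 := by positivity
    have : Qt - Q ≤ l ^ (d + 1) / (p * D ^ 2 * c ^ 2) * (π ^ 2 / 6) := by
      rw [hQt', hQ']
      have heq : a * (1 + -Real.log (1 - z) / D) - a * (1 + T)
          = a * (-Real.log (1 - z) / D - T) := by ring
      rw [heq]
      calc a * (-Real.log (1 - z) / D - T) ≤ a * (z * (π ^ 2 / 6) / D ^ 2) :=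
            mul_le_mul_of_nonneg_left hGT ha0.le
        _ = a * z / D ^ 2 * (π ^ 2 / 6) := by ring
        _ ≤ l ^ (d + 1) / (p * D ^ 2 * c ^ 2) * (π ^ 2 / 6) :=
            mul_le_mul_of_nonneg_right hcoef hpi
    linarith
  · rw [hQ', hQt']
    have : 1 + T ≤ 1 + -Real.log (1 - z) / D := by linarith
    exact mul_le_mul_of_nonneg_left this ha0.le
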